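/- Let L ⊆ ℤⁿ be a zonotopal lattice, let (·,·) be a weighted inner product on ℝⁿ, let F = span_ℝ(L), and let F^⊥ be the orthogonal complement of F with respect to (·,·). Let x ∈ ℝⁿ and let α₁,…,αₙ ≥ 0 be reals, and set P = x + ∏ᵢ [−αᵢ, αᵢ]. If P ∩ F^⊥ = ∅, then there exists an elementary vector y ∈ L such that (y, z) > 0 for all z ∈ P. -/

import Mathlib

/-- The support of an integer vector: the set of its nonzero coordinates. -/
def supp {n : ℕ} (v : Fin n → ℤ) : Set (Fin n) := {i | v i ≠ 0}

/-- `v` is an elementary vector of the lattice `L ⊆ ℤⁿ`: it is a nonzero lattice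
vector with entries in `{-1,0,+1}` whose support is minimal among supports of
nonzero lattice vectors. -/
def IsElementary {n : ℕ} (L : AddSubgroup (Fin n → ℤ)) (v : Fin n → ℤ) : Prop :=
  v ∈ L ∧ v ≠ 0 ∧ (∀ i, v i = -1 ∨ v i = 0 ∨ v i = 1) ∧
    ∀ u ∈ L, u ≠ 0 → ¬ (supp u ⊂ supp v)

/-- A lattice `L ⊆ ℤⁿ` is zonotopal if every nonzero lattice vector's support
contains the support of some elementary vector. -/
def IsZonotopal {n : ℕ} (L : AddSubgroup (Fin n → ℤ)) : Prop :=
  ∀ v ∈ L, v ≠ 0 → ∃ u, IsElementary L u ∧ supp u ⊆ supp v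

/-- The weighted inner product on `ℝⁿ` with weights `lam`. -/
def wip {n : ℕ} (lam : Fin n → ℝ) (x y : Fin n → ℝ) : ℝ := ∑ i, lam i * x i * y i

/-- Coordinatewise cast of an integer vector to a real vector. -/
def icast {n : ℕ} (v : Fin n → ℤ) : Fin n → ℝ := fun i => (v i : ℝ)

/-- The real span `F` of a lattice `L ⊆ ℤⁿ`. -/
def latticeSpan {n : ℕ} (L : AddSubgroup (Fin n → ℤ)) : Submodule ℝ (Fin n → ℝ) :=
  Submodule.span ℝ (icast '' (L : Set (Fin n → ℤ)))

/-- The Dirichlet-Voronoi polytope of a lattice `L ⊆ ℤⁿ` with respect to the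
weighted inner product with weights `lam`. -/
def DV {n : ℕ} (L : AddSubgroup (Fin n → ℤ)) (lam : Fin n → ℝ) : Set (Fin n → ℝ) :=
  {x | x ∈ latticeSpan L ∧
    ∀ v ∈ L, wip lam x (icast v) ≤ wip lam (icast v) (icast v) / 2}

/-- `v` is a strict Voronoi vector of `L` with respect to the weighted inner
product with weights `lam`: `±v` are the unique shortest vectors of `v + 2L`. -/
def IsStrictVoronoi {n : ℕ} (L : AddSubgroup (Fin n → ℤ)) (lam : Fin n → ℝ)
    (v : Fin n → ℤ) : Prop :=
  v ∈ L ∧ v ≠ 0 ∧ ∀ w ∈ L, v + 2 • w ≠ v → v + 2 • w ≠ -v →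
    wip lam (icast v) (icast v) <
      wip lam (icast (v + 2 • w)) (icast (v + 2 • w))

/-- Two integer vectors are conformal if their entries never have opposite signs. -/
def IsConformal {n : ℕ} (v w : Fin n → ℤ) : Prop := ∀ i, 0 ≤ v i * w i

/-- The sign of a real number, as an integer in `{-1,0,+1}`. -/
noncomputable def sgnR (t : ℝ) : ℤ := if 0 < t then 1 else if t < 0 then -1 else 0

/-- A covector of the vector configuration `X`: the sign vector of the values of a
linear functional on the configuration. -/
def IsCovector {n d : ℕ} (X : Fin n → Fin d → ℝ) (s : Fin n → ℤ) : Prop :=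
  ∃ f : (Fin d → ℝ) →ₗ[ℝ] ℝ, ∀ i, s i = sgnR (f (X i))

/-- A cocircuit of the vector configuration `X`: a nonzero covector of minimal support. -/
def IsCocircuit {n d : ℕ} (X : Fin n → Fin d → ℝ) (s : Fin n → ℤ) : Prop :=
  IsCovector X s ∧ s ≠ 0 ∧ ∀ t, IsCovector X t → t ≠ 0 → ¬ (supp t ⊂ supp s)

/-- The lattice in `ℤⁿ` generated by the cocircuits of `X`. -/
def cocircuitLattice {n d : ℕ} (X : Fin n → Fin d → ℝ) : AddSubgroup (Fin n → ℤ) :=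
  AddSubgroup.closure {s | IsCocircuit X s}

/-- A linear subspace of `ℝ^d` spanned by a subset of the configuration `X`. -/
def SpannedSubspace {n d : ℕ} (X : Fin n → Fin d → ℝ)
    (W : Submodule ℝ (Fin d → ℝ)) : Prop :=
  ∃ S : Set (Fin n), W = Submodule.span ℝ (X '' S)

/-- McMullen's condition (II): every `(d-2)`-dimensional subspace spanned by vectors
of `X` is contained in exactly `2` or `3` hyperplanes spanned by vectors of `X`. -/
def ConditionII {n d : ℕ} (X : Fin n → Fin d → ℝ) : Prop :=
  ∀ W : Submodule ℝ (Fin d → ℝ), SpannedSubspace X W → Module.finrank ℝ W = d - 2 →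
    {H : Submodule ℝ (Fin d → ℝ) |
        SpannedSubspace X H ∧ Module.finrank ℝ H = d - 1 ∧ W ≤ H}.ncard = 2 ∨
    {H : Submodule ℝ (Fin d → ℝ) |
        SpannedSubspace X H ∧ Module.finrank ℝ H = d - 1 ∧ W ≤ H}.ncard = 3

/-- The zonotope generated by the vector configuration `X`, i.e. the Minkowski sum
of the segments `conv{xᵢ, -xᵢ}`. -/
def zonotope {n d : ℕ} (X : Fin n → Fin d → ℝ) : Set (Fin d → ℝ) :=
  {z | ∃ c : Fin n → ℝ, (∀ i, |c i| ≤ 1) ∧ z = ∑ i, c i • X i}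

/-- `P` tiles `ℝ^d` face-to-face by translations: some family of translates of `P`
covers `ℝ^d`, and any two distinct translates intersect in a common (possibly empty)
exposed face. -/
def TilesFaceToFace {d : ℕ} (P : Set (Fin d → ℝ)) : Prop :=
  ∃ T : Set (Fin d → ℝ),
    (∀ x, ∃ t ∈ T, x ∈ (t + ·) '' P) ∧
    ∀ s ∈ T, ∀ t ∈ T, s ≠ t →
      IsExposed ℝ ((s + ·) '' P) (((s + ·) '' P) ∩ ((t + ·) '' P)) ∧
      IsExposed ℝ ((t + ·) '' P) (((s + ·) '' P) ∩ ((t + ·) '' P))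

noncomputable def mfun {n : ℕ} (lam x α : Fin n → ℝ) (y : Fin n → ℝ) : ℝ :=
  ∑ i, lam i * (y i * x i - α i * |y i|)

noncomputable def eE {n : ℕ} (lam : Fin n → ℝ) (hlam : ∀ i, 0 < lam i) :
    (Fin n → ℝ) ≃ₗ[ℝ] EuclideanSpace ℝ (Fin n) :=
  (LinearEquiv.piCongrRight fun i =>
    LinearEquiv.smulOfNeZero ℝ ℝ (Real.sqrt (lam i))
      (ne_of_gt (Real.sqrt_pos.mpr (hlam i)))) ≪≫ₗ
    (WithLp.linearEquiv 2 ℝ (Fin n → ℝ)).symm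

lemma eE_apply {n : ℕ} (lam : Fin n → ℝ) (hlam : ∀ i, 0 < lam i) (y : Fin n → ℝ) (i : Fin n) :
    eE lam hlam y i = Real.sqrt (lam i) * y i := by
  simp [eE, WithLp.linearEquiv, LinearEquiv.smulOfNeZero, LinearEquiv.smulOfUnit,
    Units.smul_def, smul_eq_mul]

lemma inner_eE {n : ℕ} (lam : Fin n → ℝ) (hlam : ∀ i, 0 < lam i) (y z : Fin n → ℝ) :
    (inner ℝ (eE lam hlam y) (eE lam hlam z) : ℝ) = wip lam y z := by
  rw [PiLp.inner_apply, wip]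
  refine Finset.sum_congr rfl fun i _ => ?_
  rw [RCLike.inner_apply, eE_apply, eE_apply]
  have h := Real.mul_self_sqrt (le_of_lt (hlam i))
  simp only [starRingEnd_apply, star_trivial]
  calc √(lam i) * z i * (√(lam i) * y i) = (√(lam i) * √(lam i)) * y i * z i := by ring
  _ = lam i * y i * z i := by rw [h]

lemma wip_smul_left {n : ℕ} (lam : Fin n → ℝ) (c : ℝ) (y w : Fin n → ℝ) :
    wip lam (c • y) w = c * wip lam y w := by
  rw [wip, wip, Finset.mul_sum]
  exact Finset.sum_congr rfl fun i _ => by simp [Pi.smul_apply, smul_eq_mul]; ring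

lemma wip_add_left {n : ℕ} (lam : Fin n → ℝ) (y₁ y₂ w : Fin n → ℝ) :
    wip lam (y₁ + y₂) w = wip lam y₁ w + wip lam y₂ w := by
  rw [wip, wip, wip, ← Finset.sum_add_distrib]
  exact Finset.sum_congr rfl fun i _ => by simp [Pi.add_apply]; ring

lemma step1 {n : ℕ} (L : AddSubgroup (Fin n → ℤ)) (lam x α : Fin n → ℝ)
    (hlam : ∀ i, 0 < lam i) (hα : ∀ i, 0 ≤ α i)
    (hdisj : {z | ∀ i, |z i - x i| ≤ α i} ∩ {y | ∀ w ∈ latticeSpan L, wip lam y w = 0} = ∅) :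
    ∃ y₀ : Fin n → ℝ, y₀ ∈ latticeSpan L ∧ 0 < mfun lam x α y₀ := by
  set K : Set (Fin n → ℝ) := {y | ∀ w ∈ latticeSpan L, wip lam y w = 0} with hK
  set P : Set (Fin n → ℝ) := {z | ∀ i, |z i - x i| ≤ α i} with hPdef
  have hPeq : P = Set.pi Set.univ (fun i => Set.Icc (x i - α i) (x i + α i)) := by
    ext z
    simp only [hPdef, Set.mem_setOf_eq, Set.mem_pi, Set.mem_univ, true_imp_iff,
      Set.mem_Icc, abs_le]
    constructor
    · intro h i; have := h i; constructor <;> linarith [(this).1, (this).2]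
    · intro h i; have := h i; constructor <;> linarith [(this).1, (this).2]
  have hPcomp : IsCompact P := by
    rw [hPeq]; exact isCompact_univ_pi (fun i => isCompact_Icc)
  have hPconv : Convex ℝ P := by
    rw [hPeq]; exact convex_pi (fun i _ => convex_Icc _ _)
  have hKsmul : ∀ c : ℝ, ∀ a ∈ K, c • a ∈ K := by
    intro c a ha w hw; rw [wip_smul_left, ha w hw, mul_zero]
  have hKconv : Convex ℝ K := by
    intro a ha b hb s t hs ht hst
    intro w hw
    rw [wip_add_left, wip_smul_left, wip_smul_left, ha w hw, hb w hw]; ring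
  have hKclosed : IsClosed K := by
    have : K = ⋂ w ∈ latticeSpan L, {y | wip lam y w = 0} := by
      ext y; simp [hK]
    rw [this]
    refine isClosed_biInter fun w _ => isClosed_eq ?_ continuous_const
    exact continuous_finset_sum _ fun i _ =>
      ((continuous_const.mul (continuous_apply i)).mul continuous_const)
  have hdisj' : Disjoint K P := by
    rw [Set.disjoint_iff_inter_eq_empty, Set.inter_comm]; exact hdisj
  obtain ⟨f, u, v, h1, huv, h2⟩ :=
    geometric_hahn_banach_closed_compact hKconv hKclosed hPconv hPcomp hdisj'
  have hf0 : ∀ a ∈ K, f a = 0 := by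
    intro a ha
    by_contra hne
    have hmem := hKsmul ((|u| + 1) / f a) a ha
    have := h1 _ hmem
    rw [map_smul, smul_eq_mul, div_mul_cancel₀ _ hne] at this
    linarith [le_abs_self u]
  have h0K : (0 : Fin n → ℝ) ∈ K := by
    intro w hw; rw [show (0 : Fin n → ℝ) = (0:ℝ) • 0 by simp, wip_smul_left]; ring
  have hu0 : 0 < u := by have := h1 0 h0K; rwa [map_zero] at this
  -- define y₀
  set y₀ : Fin n → ℝ := fun i => f (fun j => if i = j then (1:ℝ) else 0) / lam i with hy₀
  have hfwip : ∀ z, f z = wip lam y₀ z := by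
    intro z
    rw [wip]
    conv_lhs => rw [pi_eq_sum_univ z]
    rw [map_sum]
    refine Finset.sum_congr rfl fun i _ => ?_
    rw [map_smul, smul_eq_mul]
    have hl := ne_of_gt (hlam i)
    simp only [hy₀]
    field_simp
  -- y₀ ∈ latticeSpan L
  have hy₀mem : y₀ ∈ latticeSpan L := by
    set e := eE lam hlam
    set F' : Submodule ℝ (EuclideanSpace ℝ (Fin n)) :=
      (latticeSpan L).map (e : (Fin n → ℝ) →ₗ[ℝ] EuclideanSpace ℝ (Fin n)) with hF'
    have hmemF' : e y₀ ∈ F' := by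
      rw [← Submodule.orthogonal_orthogonal F', Submodule.mem_orthogonal]
      intro b hb
      have hbK : e.symm b ∈ K := by
        intro w hw
        rw [← inner_eE lam hlam, e.apply_symm_apply]
        have : e w ∈ F' := ⟨w, hw, rfl⟩
        have := (Submodule.mem_orthogonal F' b).mp hb (e w) this
        rw [real_inner_comm] at this
        exact this
      have := hf0 _ hbK
      rw [hfwip, ← inner_eE lam hlam, e.apply_symm_apply] at this
      rw [real_inner_comm]
      exact this
    rw [hF', Submodule.mem_map] at hmemF'
    obtain ⟨w, hw, hew⟩ := hmemF'
    have : w = y₀ := e.injective hew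
    rwa [this] at hw
  -- positivity
  refine ⟨y₀, hy₀mem, ?_⟩
  set z' : Fin n → ℝ := fun i => if 0 ≤ y₀ i then x i - α i else x i + α i with hz'
  have hz'P : z' ∈ P := by
    intro i
    show |z' i - x i| ≤ α i
    rw [hz']
    dsimp only
    by_cases h : 0 ≤ y₀ i
    · rw [if_pos h, show x i - α i - x i = -α i by ring, abs_neg, abs_of_nonneg (hα i)]
    · rw [if_neg h, show x i + α i - x i = α i by ring, abs_of_nonneg (hα i)]
  have hval : mfun lam x α y₀ = wip lam y₀ z' := by
    rw [mfun, wip]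
    refine Finset.sum_congr rfl fun i _ => ?_
    have : z' i = if 0 ≤ y₀ i then x i - α i else x i + α i := rfl
    rw [this]
    by_cases h : 0 ≤ y₀ i
    · rw [if_pos h, abs_of_nonneg h]; ring
    · rw [if_neg h, abs_of_neg (lt_of_not_ge h)]; ring
  rw [hval, ← hfwip]
  exact lt_trans hu0 (lt_trans huv (h2 _ hz'P))

lemma mfun_smul {n : ℕ} (lam x α : Fin n → ℝ) (t : ℝ) (ht : 0 ≤ t) (y : Fin n → ℝ) :
    mfun lam x α (t • y) = t * mfun lam x α y := by
  rw [mfun, mfun, Finset.mul_sum]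
  refine Finset.sum_congr rfl fun i _ => ?_
  simp only [Pi.smul_apply, smul_eq_mul, abs_mul, abs_of_nonneg ht]
  ring

lemma mfun_continuous {n : ℕ} (lam x α : Fin n → ℝ) : Continuous (mfun lam x α) := by
  refine continuous_finset_sum _ fun i _ => ?_
  exact continuous_const.mul (((continuous_apply i).mul continuous_const).sub
    (continuous_const.mul (continuous_apply i).abs))

lemma step2 {n : ℕ} (L : AddSubgroup (Fin n → ℤ)) (lam x α : Fin n → ℝ)
    (y₀ : Fin n → ℝ) (hmem : y₀ ∈ latticeSpan L) (hpos : 0 < mfun lam x α y₀) :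
    ∃ w : Fin n → ℤ, w ∈ L ∧ 0 < mfun lam x α (icast w) := by
  rw [latticeSpan, Submodule.mem_span_set'] at hmem
  obtain ⟨k, c, g, hsum⟩ := hmem
  have hg : ∀ i, ∃ a, a ∈ L ∧ icast a = (g i : Fin n → ℝ) := fun i => (g i).2
  choose v hvL hvic using hg
  set G : (Fin k → ℝ) → ℝ := fun c => mfun lam x α (∑ i, c i • icast (v i)) with hG
  have hGc : G c = mfun lam x α y₀ := by
    rw [hG]
    simp only
    congr 1
    rw [← hsum]
    exact Finset.sum_congr rfl fun i _ => by rw [hvic]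
  have hGcont : Continuous G := by
    exact (mfun_continuous lam x α).comp
      (continuous_finset_sum _ fun i _ => (continuous_apply i).smul continuous_const)
  have hpos' : 0 < G c := by rw [hGc]; exact hpos
  obtain ⟨δ, hδpos, hball⟩ := Metric.continuousAt_iff.mp hGcont.continuousAt (G c) hpos'
  have hq : ∀ i, ∃ q : ℚ, c i < (q:ℝ) ∧ (q:ℝ) < c i + δ :=
    fun i => exists_rat_btwn (by linarith)
  choose q hq1 hq2 using hq
  have hdist : dist (fun i => (q i : ℝ)) c < δ := by
    rw [dist_pi_lt_iff hδpos]
    intro i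
    rw [Real.dist_eq, abs_lt]
    constructor <;> linarith [hq1 i, hq2 i]
  have hGq : 0 < G (fun i => (q i : ℝ)) := by
    have := hball hdist
    rw [Real.dist_eq, abs_lt] at this
    linarith [this.1]
  set N : ℕ := ∏ i, (q i).den with hN
  have hNpos : 0 < N := Finset.prod_pos fun i _ => (q i).pos
  set z : Fin k → ℤ := fun i => (q i).num * ((N / (q i).den : ℕ) : ℤ) with hzdef
  have hz : ∀ i, ((z i : ℝ)) = (N : ℝ) * (q i : ℝ) := by
    intro i
    have hd : (q i).den ∣ N := Finset.dvd_prod_of_mem _ (Finset.mem_univ i)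
    obtain ⟨m, hm⟩ := hd
    have hdiv : N / (q i).den = m := by rw [hm]; exact Nat.mul_div_cancel_left m (q i).pos
    have hden : ((q i).den : ℚ) ≠ 0 := Nat.cast_ne_zero.mpr (q i).den_nz
    have h : ((q i).den : ℚ) * q i = (q i).num := Rat.den_mul_eq_num (q i)
    have hQ : ((z i : ℚ)) = (N : ℚ) * (q i) := by
      rw [hzdef]
      simp only [hdiv]
      push_cast
      rw [hm]
      push_cast
      linear_combination (-(m : ℚ)) * h
    have h2 : (((z i : ℚ)) : ℝ) = (((N : ℚ) * (q i) : ℚ) : ℝ) := by rw [hQ]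
    push_cast at h2
    exact h2
  set w : Fin n → ℤ := ∑ i, z i • v i with hw
  have hwL : w ∈ L := AddSubgroup.sum_mem _ fun i _ => AddSubgroup.zsmul_mem _ (hvL i) _
  have hic : icast w = (N : ℝ) • (∑ i, ((q i : ℝ)) • icast (v i)) := by
    funext j
    have h1 : w j = ∑ i, z i * v i j := by rw [hw]; simp
    show ((w j : ℤ) : ℝ) = _
    rw [h1]
    simp only [Pi.smul_apply, Finset.sum_apply, smul_eq_mul, icast, Int.cast_sum, Int.cast_mul]
    rw [Finset.mul_sum]
    refine Finset.sum_congr rfl fun i _ => ?_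
    rw [hz i]
    ring
  refine ⟨w, hwL, ?_⟩
  rw [hic, mfun_smul lam x α _ (by positivity)]
  exact mul_pos (by exact_mod_cast hNpos) hGq

lemma IsElementary.neg {n : ℕ} {L : AddSubgroup (Fin n → ℤ)} {v : Fin n → ℤ}
    (h : IsElementary L v) : IsElementary L (-v) := by
  obtain ⟨h1, h2, h3, h4⟩ := h
  refine ⟨neg_mem h1, neg_ne_zero.mpr h2, fun i => ?_, fun u hu hu0 hss => ?_⟩
  · rcases h3 i with h | h | h <;> simp [h]
  · have : supp (-v) = supp v := by ext i; simp [supp]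
    rw [this] at hss
    exact h4 u hu hu0 hss

lemma supp_neg {n : ℕ} (v : Fin n → ℤ) : supp (-v) = supp v := by ext i; simp [supp]

lemma exists_conformal {n : ℕ} (L : AddSubgroup (Fin n → ℤ)) (hL : IsZonotopal L) :
    ∀ k : ℕ, ∀ w : Fin n → ℤ, w ∈ L → w ≠ 0 →
      (Finset.univ.filter (fun i => w i ≠ 0)).card ≤ k →
      ∃ u, IsElementary L u ∧ supp u ⊆ supp w ∧ ∀ i, 0 ≤ u i * w i := by
  intro k
  induction k with
  | zero =>
    intro w hwL hw0 hcard
    exfalso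
    obtain ⟨i, hi⟩ := Function.ne_iff.mp hw0
    have hmem : i ∈ Finset.univ.filter (fun i => w i ≠ 0) := by
      simp [Finset.mem_filter]
      exact hi
    have := Finset.card_pos.mpr ⟨i, hmem⟩
    omega
  | succ k ih =>
    intro w hwL hw0 hcard
    obtain ⟨u₁, hu₁, hsupp₁⟩ := hL w hwL hw0
    obtain ⟨i₀, hi₀⟩ := Function.ne_iff.mp hu₁.2.1
    simp only [Pi.zero_apply] at hi₀
    have hwi₀ : w i₀ ≠ 0 := hsupp₁ hi₀
    -- sign normalization
    obtain ⟨u, hu, hsupp, hA0⟩ :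
        ∃ u, IsElementary L u ∧ supp u ⊆ supp w ∧ 0 < u i₀ * w i₀ := by
      rcases lt_or_gt_of_ne (mul_ne_zero hi₀ hwi₀) with h | h
      · refine ⟨-u₁, hu₁.neg, ?_, ?_⟩
        · rw [supp_neg]; exact hsupp₁
        · simp only [Pi.neg_apply, neg_mul]; linarith
      · exact ⟨u₁, hu₁, hsupp₁, h⟩
    by_cases hconf : ∀ i, 0 ≤ u i * w i
    · exact ⟨u, hu, hsupp, hconf⟩
    obtain ⟨j, hjn⟩ := not_forall.mp hconf
    have hj : u j * w j < 0 := lt_of_not_ge hjn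
    -- minimal |w| over positive-agreement set
    set A : Finset (Fin n) := Finset.univ.filter (fun i => 0 < u i * w i) with hAdef
    have hi₀A : i₀ ∈ A := by simp [hAdef, hA0]
    obtain ⟨i₁, hi₁A, hi₁min⟩ := A.exists_min_image (fun i => (w i).natAbs) ⟨i₀, hi₀A⟩
    have hi₁pos : 0 < u i₁ * w i₁ := by
      simp only [hAdef, Finset.mem_filter] at hi₁A; exact hi₁A.2
    have hui₁ : u i₁ ≠ 0 := fun h => by simp [h] at hi₁pos
    have hwi₁ : w i₁ ≠ 0 := fun h => by simp [h] at hi₁pos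
    obtain ⟨t, ht, ht1⟩ : ∃ t : ℤ, t = ((w i₁).natAbs : ℤ) ∧ 1 ≤ t :=
      ⟨((w i₁).natAbs : ℤ), rfl, by omega⟩
    set z : Fin n → ℤ := w - t • u with hz
    have hzL : z ∈ L := sub_mem hwL (zsmul_mem hu.1 t)
    have hzi : ∀ i, z i = w i - t * u i := fun i => by
      rw [hz]; simp [Pi.sub_apply, Pi.smul_apply, smul_eq_mul]
    have hzsupp : ∀ i, z i ≠ 0 → w i ≠ 0 := by
      intro i hzine hwi
      have hui : u i = 0 := by
        by_contra hui
        exact (hsupp hui) hwi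
      rw [hzi i, hwi, hui] at hzine
      simp at hzine
    have hzi₁ : z i₁ = 0 := by
      rw [hzi i₁]
      rcases hu.2.2.1 i₁ with h | h | h
      · rw [h] at hi₁pos ⊢
        have : w i₁ < 0 := by omega
        rw [ht]; omega
      · exact absurd h hui₁
      · rw [h] at hi₁pos ⊢
        have : 0 < w i₁ := by omega
        rw [ht]; omega
    have hkey : ∀ i, z i ≠ 0 → 0 < z i * w i := by
      intro i hzine
      have hwi : w i ≠ 0 := hzsupp i hzine
      rcases hu.2.2.1 i with h | h | h
      · -- u i = -1
        rw [hzi i, h] at hzine ⊢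
        rcases lt_or_gt_of_ne hwi with hneg | hpos
        · -- w i < 0 : then 0 < u i * w i, i ∈ A, t ≤ |w i|
          have hiA : i ∈ A := by simp [hAdef, h]; omega
          have hmin : (w i₁).natAbs ≤ (w i).natAbs := hi₁min i hiA
          have hzle : w i - t * (-1) < 0 := by rw [ht]; omega
          exact mul_pos_of_neg_of_neg hzle hneg
        · have hzgt : 0 < w i - t * (-1) := by rw [ht]; omega
          exact mul_pos hzgt hpos
      · rw [hzi i, h]
        have he : w i - t * 0 = w i := by ring
        rw [he]
        exact mul_self_pos.mpr hwi
      · -- u i = 1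
        rw [hzi i, h] at hzine ⊢
        rcases lt_or_gt_of_ne hwi with hneg | hpos
        · have hzlt : w i - t * 1 < 0 := by rw [ht]; omega
          exact mul_pos_of_neg_of_neg hzlt hneg
        · have hiA : i ∈ A := by simp [hAdef, h]; omega
          have hmin : (w i₁).natAbs ≤ (w i).natAbs := hi₁min i hiA
          have hzgt : 0 < w i - t * 1 := by rw [ht]; omega
          exact mul_pos hzgt hpos
    have hzne : z ≠ 0 := by
      have hwj : w j ≠ 0 := by
        intro h
        rw [h] at hj; simp at hj
      have huj : u j ≠ 0 := by
        intro h
        rw [h] at hj; simp at hj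
      have hzj : z j ≠ 0 := by
        rw [hzi j]
        rcases hu.2.2.1 j with h | h | h
        · rw [h] at hj ⊢
          have : 0 < w j := by omega
          omega
        · exact absurd h huj
        · rw [h] at hj ⊢
          have : w j < 0 := by omega
          omega
      exact fun h => hzj (by rw [h]; rfl)
    have hcard' : (Finset.univ.filter (fun i => z i ≠ 0)).card ≤ k := by
      have hss : Finset.univ.filter (fun i => z i ≠ 0) ⊂
          Finset.univ.filter (fun i => w i ≠ 0) := by
        refine Finset.ssubset_iff_of_subset ?_ |>.mpr ?_
        · intro i hi
          simp only [Finset.mem_filter, Finset.mem_univ, true_and] at hi ⊢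
          exact hzsupp i hi
        · refine ⟨i₁, ?_, ?_⟩ <;> simp [hwi₁, hzi₁]
      have := Finset.card_lt_card hss
      omega
    obtain ⟨u'', hu'', hsupp'', hconf''⟩ := ih z hzL hzne hcard'
    refine ⟨u'', hu'', ?_, ?_⟩
    · intro i hi
      exact hzsupp i (hsupp'' hi)
    · intro i
      rcases eq_or_ne (u'' i) 0 with h | h
      · rw [h]; simp
      · have hzine : z i ≠ 0 := hsupp'' h
        have h1 : 0 < u'' i * z i :=
          lt_of_le_of_ne (hconf'' i) (Ne.symm (mul_ne_zero h hzine))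
        have h2 : 0 < z i * w i := hkey i hzine
        have h3 : 0 < z i * z i := mul_pos_iff.mpr (by rcases lt_or_gt_of_ne hzine with h'|h'; exact Or.inr ⟨h', h'⟩; exact Or.inl ⟨h', h'⟩)
        nlinarith [mul_pos h1 h2]

lemma mfun_zero {n : ℕ} (lam x α : Fin n → ℝ) : mfun lam x α 0 = 0 := by
  simp [mfun]

lemma descent {n : ℕ} (L : AddSubgroup (Fin n → ℤ)) (hL : IsZonotopal L)
    (lam x α : Fin n → ℝ) :
    ∀ k : ℕ, ∀ w : Fin n → ℤ, w ∈ L → (∑ i, (w i).natAbs) ≤ k →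
      0 < mfun lam x α (icast w) →
      ∃ u, IsElementary L u ∧ 0 < mfun lam x α (icast u) := by
  intro k
  induction k with
  | zero =>
    intro w hwL hsum hpos
    exfalso
    have hw0 : w = 0 := by
      funext i
      have : (w i).natAbs = 0 := by
        have h5 : (w i).natAbs ≤ ∑ j, (w j).natAbs :=
          Finset.single_le_sum (f := fun j => (w j).natAbs)
            (fun j _ => Nat.zero_le _) (Finset.mem_univ i)
        omega
      simpa [Int.natAbs_eq_zero] using this
    rw [hw0] at hpos
    have : icast (0 : Fin n → ℤ) = 0 := by funext i; simp [icast]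
    rw [this, mfun_zero] at hpos
    exact lt_irrefl 0 hpos
  | succ k ih =>
    intro w hwL hsum hpos
    have hw0 : w ≠ 0 := by
      intro h
      rw [h] at hpos
      have : icast (0 : Fin n → ℤ) = 0 := by funext i; simp [icast]
      rw [this, mfun_zero] at hpos
      exact lt_irrefl 0 hpos
    obtain ⟨u, hu, hsupp, hconf⟩ :=
      exists_conformal L hL (Finset.univ.filter (fun i => w i ≠ 0)).card w hwL hw0 le_rfl
    by_cases hup : 0 < mfun lam x α (icast u)
    · exact ⟨u, hu, hup⟩
    push_neg at hup
    set w' : Fin n → ℤ := w - u with hw'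
    have hw'L : w' ∈ L := sub_mem hwL hu.1
    have hkey : ∀ i, (w i).natAbs = (u i).natAbs + (w' i).natAbs := by
      intro i
      have hw'i : w' i = w i - u i := rfl
      rcases hu.2.2.1 i with h | h | h
      · have hc := hconf i
        rw [h] at hc
        have hwine : w i ≠ 0 := hsupp (show u i ≠ 0 by rw [h]; norm_num)
        rw [hw'i, h]
        omega
      · rw [hw'i, h]; omega
      · have hc := hconf i
        rw [h] at hc
        have hwine : w i ≠ 0 := hsupp (show u i ≠ 0 by rw [h]; norm_num)
        rw [hw'i, h]
        omega
    have hsplit : mfun lam x α (icast w) =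
        mfun lam x α (icast u) + mfun lam x α (icast w') := by
      rw [mfun, mfun, mfun, ← Finset.sum_add_distrib]
      refine Finset.sum_congr rfl fun i _ => ?_
      have h1 : (w i : ℝ) = (u i : ℝ) + (w' i : ℝ) := by
        have : w' i = w i - u i := rfl
        rw [this]; push_cast; ring
      have h2 : |(w i : ℝ)| = |(u i : ℝ)| + |(w' i : ℝ)| := by
        rw [← Int.cast_abs, ← Int.cast_abs, ← Int.cast_abs, ← Int.cast_add]
        congr 1
        have h6 := hkey i
        simp only [Int.abs_eq_natAbs]
        omega
      simp only [icast]
      rw [h2, h1]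
      ring
    have hpos' : 0 < mfun lam x α (icast w') := by linarith
    have hsum' : (∑ i, (w' i).natAbs) ≤ k := by
      have hsum_eq : (∑ i, (w i).natAbs) = (∑ i, (u i).natAbs) + (∑ i, (w' i).natAbs) := by
        rw [← Finset.sum_add_distrib]
        exact Finset.sum_congr rfl fun i _ => hkey i
      have hu1 : 1 ≤ ∑ i, (u i).natAbs := by
        obtain ⟨i, hi⟩ := Function.ne_iff.mp hu.2.1
        simp only [Pi.zero_apply] at hi
        have h7 : 1 ≤ (u i).natAbs := by omega
        have h8 : (u i).natAbs ≤ ∑ j, (u j).natAbs :=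
          Finset.single_le_sum (f := fun j => (u j).natAbs)
            (fun j _ => Nat.zero_le _) (Finset.mem_univ i)
        omega
      omega
    exact ih w' hw'L hsum' hpos'


/-- If a parallelotope `P = x + ∏ᵢ [-αᵢ, αᵢ]` misses `F^⊥` (the
orthogonal complement, for the weighted inner product, of the real span `F` of a
zonotopal lattice `L`), then some elementary vector of `L` is strictly positive on
all of `P`. -/
theorem farkas_elementary {n : ℕ} (L : AddSubgroup (Fin n → ℤ)) (hL : IsZonotopal L)
    (lam : Fin n → ℝ) (hlam : ∀ i, 0 < lam i)
    (x : Fin n → ℝ) (α : Fin n → ℝ) (hα : ∀ i, 0 ≤ α i)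
    (P : Set (Fin n → ℝ)) (hP : P = {z | ∀ i, |z i - x i| ≤ α i})
    (hdisj : P ∩ {y | ∀ w ∈ latticeSpan L, wip lam y w = 0} = ∅) :
    ∃ y : Fin n → ℤ, IsElementary L y ∧ ∀ z ∈ P, 0 < wip lam (icast y) z := by
  subst hP
  obtain ⟨y₀, hy₀mem, hy₀pos⟩ := step1 L lam x α hlam hα hdisj
  obtain ⟨w, hwL, hwpos⟩ := step2 L lam x α y₀ hy₀mem hy₀pos
  obtain ⟨u, hu, hupos⟩ := descent L hL lam x α (∑ i, (w i).natAbs) w hwL le_rfl hwpos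
  refine ⟨u, hu, fun z hz => ?_⟩
  have hle : mfun lam x α (icast u) ≤ wip lam (icast u) z := by
    rw [mfun, wip]
    refine Finset.sum_le_sum fun i _ => ?_
    have hzi : |z i - x i| ≤ α i := hz i
    have h1 : |icast u i| * |z i - x i| ≤ |icast u i| * α i :=
      mul_le_mul_of_nonneg_left hzi (abs_nonneg _)
    have h2 : -(|icast u i| * |z i - x i|) ≤ icast u i * (z i - x i) := by
      rw [← abs_mul]; exact neg_abs_le _
    have key : icast u i * x i - α i * |icast u i| ≤ icast u i * z i := by nlinarith
    have h3 := mul_le_mul_of_nonneg_left key (le_of_lt (hlam i))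
    calc lam i * (icast u i * x i - α i * |icast u i|) ≤ lam i * (icast u i * z i) := h3
    _ = lam i * icast u i * z i := by ring
  linarith [hupos, hle]
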